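/- Let N ≥ 2 be an integer and q ∈ ℂ with q ≠ 0. For all α, β ∈ ℂ and all indices i,j,k,l ∈ {1,…,N}, one has Σ_{m,n,r,s} σ^{mnrs}_{ijkl} G_{(mn),(rs)} = G_{(ij),(kl)}, where σ is the braiding matrix of the calculus Γ_{−,z} on SL_q(N) and G = G(α,β) is the invariant-metric matrix. Equivalently (Corollary 2.5 of the paper for Γ_{−,z}): every invariant metric g on Γ_{−,z} is symmetric with respect to the braiding, g∘σ = g. -/

import Mathlib

open scoped BigOperators

namespace Stmt5

/-- Kronecker delta with values in `ℂ`. -/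
noncomputable def kron {N : ℕ} (i j : Fin N) : ℂ := if i = j then 1 else 0

/-- The standard R-matrix `R̂` of `SL_q(N)`: entry `R̂^{ij}_{kl}`. -/
noncomputable def Rhat (N : ℕ) (q : ℂ) (i j k l : Fin N) : ℂ :=
  q * kron i j * kron i k * kron j l
    + (1 - kron i j) * kron i l * kron j k
    + (q - q⁻¹) * (if i < j then 1 else 0) * kron i k * kron j l

/-- The inverse R-matrix: `R̂⁻¹ = R̂ − Q·id` with `Q = q − q⁻¹`. -/
noncomputable def Rinv (N : ℕ) (q : ℂ) (i j k l : Fin N) : ℂ :=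
  Rhat N q i j k l - (q - q⁻¹) * kron i k * kron j l

/-- `D_i = q^{2i}`. -/
noncomputable def D (N : ℕ) (q : ℂ) (i : Fin N) : ℂ := q ^ (2 * ((i.1 : ℤ) + 1))

/-- Braiding matrix entries of `Γ_{−,z}`:
`σ^{mnrs}_{ijkl} = D_k D_x^{−1} R̂^{pk}_{xj} (R̂^{−1})^{tn}_{yr} R̂^{xi}_{tm} (R̂^{−1})^{ys}_{pl}`
(summation over `x, p, t, y`); here `m n r s` are the upper and `i j k l` the lower indices. -/
noncomputable def sigmaMinus (N : ℕ) (q : ℂ) (m n r s i j k l : Fin N) : ℂ :=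
  ∑ x : Fin N, ∑ p : Fin N, ∑ t : Fin N, ∑ y : Fin N,
    D N q k * (D N q x)⁻¹ *
      Rhat N q p k x j * Rinv N q t n y r * Rhat N q x i t m * Rinv N q y s p l

/-- The invariant-metric matrix `G(α,β)` with entries
`G_{(ij),(kl)} = q^{2j} α δ_{il} δ_{jk} + β δ_{ij} δ_{kl}`. -/
noncomputable def G (N : ℕ) (q α β : ℂ) : Matrix (Fin N × Fin N) (Fin N × Fin N) ℂ :=
  Matrix.of fun r c =>
    q ^ (2 * ((r.2.1 : ℤ) + 1)) * α * kron r.1 c.2 * kron r.2 c.1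
      + β * kron r.1 r.2 * kron c.1 c.2

noncomputable def cc (q : ℂ) {N : ℕ} (i j : Fin N) : ℂ :=
  q * kron i j + (q - q⁻¹) * (if i < j then 1 else 0)
noncomputable def dd {N : ℕ} (i j : Fin N) : ℂ := 1 - kron i j

lemma Rhat_eq (N : ℕ) (q : ℂ) (i j k l : Fin N) :
    Rhat N q i j k l = cc q i j * kron i k * kron j l + dd i j * kron i l * kron j k := by
  simp only [Rhat, cc, dd]; split_ifs <;> ring

lemma Rinv_eq (N : ℕ) (q : ℂ) (i j k l : Fin N) :
    Rinv N q i j k l = (cc q i j - (q - q⁻¹)) * kron i k * kron j l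
      + dd i j * kron i l * kron j k := by
  simp only [Rinv, Rhat_eq, cc, dd]; split_ifs <;> ring

/-- ascending telescoping sum -/
lemma tele (q : ℂ) (hq : q ≠ 0) (a : ℤ) (m : ℕ) :
    ∑ n ∈ Finset.range m, (q - q⁻¹) * q ^ (a + 2 * (n : ℤ))
      = q ^ (a + 2 * (m : ℤ) - 1) - q ^ (a - 1) := by
  induction m with
  | zero => simp
  | succ m ih =>
    rw [Finset.sum_range_succ, ih]
    push_cast
    have e1 : q ^ (a + 2 * (m : ℤ)) = q ^ (a + 2 * (m : ℤ) - 1) * q := by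
      rw [← zpow_add_one₀ hq]; congr 1; ring
    have e2 : q ^ (a + 2 * ((m : ℤ) + 1) - 1) = q ^ (a + 2 * (m : ℤ) - 1) * q * q := by
      rw [← zpow_add_one₀ hq, ← zpow_add_one₀ hq]; congr 1; ring
    rw [e1, e2]
    field_simp
    ring

/-- descending telescoping sum -/
lemma tele' (q : ℂ) (hq : q ≠ 0) (a : ℤ) (m : ℕ) :
    ∑ n ∈ Finset.range m, (q - q⁻¹) * q ^ (a - 2 * (n : ℤ))
      = q ^ (a + 1) - q ^ (a - 2 * (m : ℤ) + 1) := by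
  induction m with
  | zero => simp
  | succ m ih =>
    rw [Finset.sum_range_succ, ih]
    push_cast
    have e1 : q ^ (a - 2 * (m : ℤ)) = q ^ (a - 2 * ((m : ℤ) + 1) + 1) * q := by
      rw [← zpow_add_one₀ hq]; congr 1; ring
    have e2 : q ^ (a - 2 * (m : ℤ) + 1) = q ^ (a - 2 * ((m : ℤ) + 1) + 1) * q * q := by
      rw [← zpow_add_one₀ hq, ← zpow_add_one₀ hq]; congr 1; ring
    rw [e1, e2]
    field_simp
    ring

lemma range_filter_not_lt (K t : ℕ) (ht : t < K) :
    Finset.filter (fun n => ¬ t < n) (Finset.range K) = Finset.range (t+1) := by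
  ext n; simp only [Finset.mem_filter, Finset.mem_range]; omega

lemma range_filter_le (K t : ℕ) :
    Finset.filter (fun n => t ≤ n) (Finset.range K) = Finset.Ico t K := by
  ext n; simp only [Finset.mem_filter, Finset.mem_range, Finset.mem_Ico]; omega

/-- collapse `if` to range sum -/
lemma ite_range_sum (K t : ℕ) (ht : t < K) (h : ℕ → ℂ) :
    ∑ n ∈ Finset.range K, (if t < n then 0 else h n) = ∑ n ∈ Finset.range (t+1), h n := by
  rw [← range_filter_not_lt K t ht, Finset.sum_filter]
  exact Finset.sum_congr rfl fun n _ => by split_ifs <;> simp_all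

/-- T1: weighted partial trace of Rinv -/
lemma T1 (N : ℕ) (q : ℂ) (hq : q ≠ 0) (t y : Fin N) :
    ∑ n : Fin N, Rinv N q t n y n * q ^ (2 * ((n.1 : ℤ) + 1)) = q * kron t y := by
  have step : ∀ n : Fin N, Rinv N q t n y n * q ^ (2 * ((n.1 : ℤ) + 1))
      = kron t y * ((if t = n then q * q ^ (2 * ((n.1 : ℤ) + 1)) else 0)
        + (if t.1 < n.1 then 0 else -((q - q⁻¹) * q ^ (2 * ((n.1 : ℤ) + 1))))) := by
    intro n
    have hv : (t = n) ↔ (t.1 = n.1) := Fin.ext_iff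
    simp only [Rinv_eq, cc, dd, kron, Fin.lt_def, hv]
    split_ifs <;> simp_all <;> ring
  simp only [step]
  rw [← Finset.mul_sum, Finset.sum_add_distrib]
  have c1 : ∑ n : Fin N, (if t = n then q * q ^ (2 * ((n.1 : ℤ) + 1)) else 0)
      = q * q ^ (2 * ((t.1 : ℤ) + 1)) := by
    simp
  have c2 : ∑ n : Fin N, (if t.1 < n.1 then 0 else -((q - q⁻¹) * q ^ (2 * ((n.1 : ℤ) + 1))))
      = -(q ^ (2 * ((t.1 : ℤ) + 1)) * q - q) := by
    rw [Fin.sum_univ_eq_sum_range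
      (fun n => if t.1 < n then 0 else -((q - q⁻¹) * q ^ (2 * ((n : ℤ) + 1)))) N,
      ite_range_sum N t.1 t.isLt]
    rw [show (∑ n ∈ Finset.range (t.1+1), -((q - q⁻¹) * q ^ (2 * ((n : ℤ) + 1))))
        = -(∑ n ∈ Finset.range (t.1+1), (q - q⁻¹) * q ^ (2 + 2 * (n : ℤ))) by
      rw [← Finset.sum_neg_distrib]
      exact Finset.sum_congr rfl fun n _ => by rw [show 2*((n:ℤ)+1) = 2 + 2*(n:ℤ) by ring]]
    rw [tele q hq 2 (t.1+1)]
    have e1 : q ^ (2 + 2 * ((t.1:ℕ)+1 : ℤ) - 1) = q ^ (2 * ((t.1 : ℤ) + 1)) * q := by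
      rw [← zpow_add_one₀ hq]; congr 1; push_cast; ring
    have : ((t.1+1 : ℕ) : ℤ) = (t.1 : ℤ) + 1 := by push_cast; ring
    rw [this, e1]
    norm_num
  rw [c1, c2]
  ring

lemma ite_range_sum' (K t : ℕ) (ht : t ≤ K) (h : ℕ → ℂ) :
    ∑ n ∈ Finset.range K, (if n < t then h n else 0) = ∑ n ∈ Finset.range t, h n := by
  have : Finset.filter (fun n => n < t) (Finset.range K) = Finset.range t := by
    ext n; simp only [Finset.mem_filter, Finset.mem_range]; omega
  rw [← this, Finset.sum_filter]

/-- T2: inverse-weighted partial trace of Rhat -/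
lemma T2 (N : ℕ) (q : ℂ) (hq : q ≠ 0) (k j : Fin N) :
    ∑ x : Fin N, (q ^ (2 * ((x.1 : ℤ) + 1)))⁻¹ * Rhat N q x k x j = q⁻¹ * kron k j := by
  have step : ∀ x : Fin N, (q ^ (2 * ((x.1 : ℤ) + 1)))⁻¹ * Rhat N q x k x j
      = kron k j * ((if x = k then q * q ^ (-(2 * ((x.1 : ℤ) + 1))) else 0)
        + (if x.1 < k.1 then (q - q⁻¹) * q ^ (-(2 * ((x.1 : ℤ) + 1))) else 0)) := by
    intro x
    have hv : (x = k) ↔ (x.1 = k.1) := Fin.ext_iff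
    simp only [Rhat_eq, cc, dd, kron, Fin.lt_def, hv, ← zpow_neg]
    split_ifs <;> simp_all <;> ring
  simp only [step]
  rw [← Finset.mul_sum, Finset.sum_add_distrib]
  have c1 : ∑ x : Fin N, (if x = k then q * q ^ (-(2 * ((x.1 : ℤ) + 1))) else 0)
      = q * q ^ (-(2 * ((k.1 : ℤ) + 1))) := by simp
  have c2 : ∑ x : Fin N, (if x.1 < k.1 then (q - q⁻¹) * q ^ (-(2 * ((x.1 : ℤ) + 1))) else 0)
      = q⁻¹ - q ^ (-2 - 2 * (k.1 : ℤ) + 1) := by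
    rw [Fin.sum_univ_eq_sum_range
      (fun n => if n < k.1 then (q - q⁻¹) * q ^ (-(2 * ((n : ℤ) + 1))) else 0) N,
      ite_range_sum' N k.1 k.isLt.le]
    rw [show (∑ n ∈ Finset.range k.1, (q - q⁻¹) * q ^ (-(2 * ((n : ℤ) + 1))))
        = ∑ n ∈ Finset.range k.1, (q - q⁻¹) * q ^ ((-2 : ℤ) - 2 * (n : ℤ)) from
      Finset.sum_congr rfl fun n _ => by rw [show -(2*((n:ℤ)+1)) = (-2 : ℤ) - 2*(n:ℤ) by ring]]
    rw [tele' q hq (-2) k.1]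
    norm_num
  rw [c1, c2]
  have e1 : q * q ^ (-(2 * ((k.1 : ℤ) + 1))) = q ^ (-2 - 2 * (k.1 : ℤ) + 1) := by
    rw [show (-2 - 2 * (k.1 : ℤ) + 1) = -(2 * ((k.1 : ℤ) + 1)) + 1 by ring,
      zpow_add_one₀ hq]; ring
  rw [e1]; ring

/-- T3: R̂ R̂⁻¹ = id -/
lemma T3 (N : ℕ) (q : ℂ) (hq : q ≠ 0) (x i y r : Fin N) :
    ∑ t : Fin N, ∑ m : Fin N, Rhat N q x i t m * Rinv N q t m y r
      = kron x y * kron i r := by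
  simp only [Rhat_eq, Rinv_eq]
  simp only [kron, cc, dd, mul_ite, ite_mul, mul_one, mul_zero, one_mul, zero_mul,
    add_mul, mul_add, Finset.sum_add_distrib, Finset.sum_ite_eq, Finset.sum_ite_eq',
    Finset.mem_univ, if_true]
  rcases eq_or_ne i r with rfl|h1 <;> rcases eq_or_ne x y with rfl|h2 <;>
    rcases eq_or_ne x i with rfl|h3 <;> simp_all <;> (try split_ifs) <;>
    (try subst_vars) <;> (try simp_all) <;> first | omega | (field_simp; ring)

set_option maxHeartbeats 1000000 in
/-- The key geometric-sum identity S(i,k) = δ_{ik}. -/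
lemma Slem (N : ℕ) (q : ℂ) (hq : q ≠ 0) (i k : Fin N) :
    ∑ p : Fin N, q ^ (2 * ((k.1 : ℤ) + 1)) * (q ^ (2 * ((p.1 : ℤ) + 1)))⁻¹
      * (cc q p k * (cc q p i - (q - q⁻¹))) = kron i k := by
  have hD : ∀ p : Fin N, q ^ (2 * ((k.1 : ℤ) + 1)) * (q ^ (2 * ((p.1 : ℤ) + 1)))⁻¹
      = q ^ (2 * (k.1 : ℤ) - 2 * (p.1 : ℤ)) := by
    intro p; rw [← zpow_neg, ← zpow_add₀ hq]; congr 1; ring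
  have step : ∀ p : Fin N, q ^ (2 * ((k.1 : ℤ) + 1)) * (q ^ (2 * ((p.1 : ℤ) + 1)))⁻¹
      * (cc q p k * (cc q p i - (q - q⁻¹)))
      = (if p = k then q * (q * (if k.1 = i.1 then 1 else 0)
            + (q - q⁻¹) * (if k.1 < i.1 then 1 else 0) - (q - q⁻¹)) else 0)
        + ((if p.1 = i.1 ∧ p.1 < k.1 then
              (q - q⁻¹) * q ^ (2 * (k.1 : ℤ) - 2 * (p.1 : ℤ)) * q else 0)
          + (if i.1 ≤ p.1 ∧ p.1 < k.1 then
              -((q - q⁻¹) * ((q - q⁻¹) * q ^ (2 * (k.1 : ℤ) - 2 * (p.1 : ℤ)))) else 0)) := by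
    intro p
    rw [hD p]
    have hv : (p = k) ↔ (p.1 = k.1) := Fin.ext_iff
    rcases eq_or_ne p k with rfl | hpk
    · rw [show 2 * (p.1 : ℤ) - 2 * (p.1 : ℤ) = 0 by ring, zpow_zero]
      simp only [cc, kron, Fin.lt_def, if_pos rfl]
      split_ifs <;> first | (exfalso; omega) | ring | simp_all
    · have h2 : ¬ p.1 = k.1 := fun h => hpk (Fin.ext h)
      simp only [cc, kron, Fin.lt_def, if_neg hpk, h2, if_false]
      split_ifs <;> first | (exfalso; omega) | ring | simp_all
  simp only [step]
  rw [Finset.sum_add_distrib, Finset.sum_add_distrib]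
  have c1 : (∑ p : Fin N, (if p = k then q * (q * (if k.1 = i.1 then 1 else 0)
        + (q - q⁻¹) * (if k.1 < i.1 then 1 else 0) - (q - q⁻¹)) else 0))
      = q * (q * (if k.1 = i.1 then 1 else 0)
        + (q - q⁻¹) * (if k.1 < i.1 then 1 else 0) - (q - q⁻¹)) := by simp
  have c2 : (∑ p : Fin N, (if p.1 = i.1 ∧ p.1 < k.1 then
        (q - q⁻¹) * q ^ (2 * (k.1 : ℤ) - 2 * (p.1 : ℤ)) * q else 0))
      = (if i.1 < k.1 then (q - q⁻¹) * q ^ (2 * (k.1 : ℤ) - 2 * (i.1 : ℤ)) * q else 0) := by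
    rw [Fin.sum_univ_eq_sum_range (fun n => if n = i.1 ∧ n < k.1 then
        (q - q⁻¹) * q ^ (2 * (k.1 : ℤ) - 2 * (n : ℤ)) * q else 0) N]
    simp only [ite_and]
    rw [Finset.sum_ite_eq' (Finset.range N) i.1]
    simp [i.isLt]
  have c3 : (∑ p : Fin N, (if i.1 ≤ p.1 ∧ p.1 < k.1 then
        -((q - q⁻¹) * ((q - q⁻¹) * q ^ (2 * (k.1 : ℤ) - 2 * (p.1 : ℤ)))) else 0))
      = ∑ n ∈ Finset.Ico i.1 k.1,
          -((q - q⁻¹) * ((q - q⁻¹) * q ^ (2 * (k.1 : ℤ) - 2 * (n : ℤ)))) := by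
    rw [Fin.sum_univ_eq_sum_range (fun n => if i.1 ≤ n ∧ n < k.1 then
        -((q - q⁻¹) * ((q - q⁻¹) * q ^ (2 * (k.1 : ℤ) - 2 * (n : ℤ)))) else 0) N]
    have hf : Finset.filter (fun n => i.1 ≤ n ∧ n < k.1) (Finset.range N)
        = Finset.Ico i.1 k.1 := by
      ext n; simp only [Finset.mem_filter, Finset.mem_range, Finset.mem_Ico]
      constructor
      · rintro ⟨_, h2⟩; exact h2
      · rintro ⟨h1, h2⟩; exact ⟨h2.trans k.isLt, h1, h2⟩
    rw [← hf, Finset.sum_filter]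
  rw [c1, c2, c3]
  rcases lt_or_ge i.1 k.1 with hik | hik
  · -- i < k : everything cancels to 0
    have hne : i ≠ k := fun h => by rw [h] at hik; omega
    have h1 : ¬ k.1 = i.1 := by omega
    have h2 : ¬ k.1 < i.1 := by omega
    rw [if_pos hik, if_neg h1, if_neg h2, Finset.sum_Ico_eq_sum_range]
    have hstep : ∀ m ∈ Finset.range (k.1 - i.1),
        -((q - q⁻¹) * ((q - q⁻¹) * q ^ (2 * (k.1 : ℤ) - 2 * ((i.1 + m : ℕ) : ℤ))))
        = -((q - q⁻¹) * ((q - q⁻¹) * q ^ ((2 * (k.1 : ℤ) - 2 * (i.1 : ℤ)) - 2 * (m : ℤ)))) := by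
      intro m _; congr 2; congr 1; push_cast; ring
    rw [Finset.sum_congr rfl hstep, Finset.sum_neg_distrib, ← Finset.mul_sum,
      tele' q hq (2 * (k.1 : ℤ) - 2 * (i.1 : ℤ)) (k.1 - i.1)]
    have hc : ((k.1 - i.1 : ℕ) : ℤ) = (k.1 : ℤ) - (i.1 : ℤ) := by omega
    rw [hc, show 2 * (k.1 : ℤ) - 2 * (i.1 : ℤ) - 2 * ((k.1 : ℤ) - (i.1 : ℤ)) + 1 = 1 by ring,
      show 2 * (k.1 : ℤ) - 2 * (i.1 : ℤ) + 1 = (2 * (k.1 : ℤ) - 2 * (i.1 : ℤ)) + 1 by ring,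
      zpow_add_one₀ hq, zpow_one]
    simp only [kron, if_neg hne]
    ring
  · -- k ≤ i
    have h2 : ¬ i.1 < k.1 := by omega
    rw [if_neg h2, Finset.Ico_eq_empty (by omega), Finset.sum_empty]
    rcases eq_or_ne k.1 i.1 with he | hne
    · have : i = k := Fin.ext he.symm
      rw [if_pos he, if_neg (by omega), this]
      simp only [kron, if_pos rfl]
      field_simp
      simp only [if_true]
      ring
    · have hne' : i ≠ k := fun h => hne (by rw [h])
      have h3 : k.1 < i.1 := by omega
      rw [if_neg hne, if_pos h3]
      simp only [kron, if_neg hne']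
      ring

set_option maxHeartbeats 1000000 in
/-- T4: the crossing/second-inverse identity. -/
lemma T4 (N : ℕ) (q : ℂ) (hq : q ≠ 0) (i j k l : Fin N) :
    ∑ x : Fin N, ∑ p : Fin N,
      D N q k * (D N q x)⁻¹ * Rhat N q p k x j * Rinv N q x i p l
      = kron i j * kron k l := by
  have expand : ∀ x p : Fin N,
      D N q k * (D N q x)⁻¹ * Rhat N q p k x j * Rinv N q x i p l
      = D N q k * (D N q x)⁻¹ * (cc q p k * (cc q x i - (q - q⁻¹)))
          * (kron k j * kron i l) * (kron p x * kron x p)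
        + D N q k * (D N q x)⁻¹ * (cc q p k * dd x i * kron k j)
          * (kron p x * kron x l * kron i p)
        + D N q k * (D N q x)⁻¹ * (dd p k * (cc q x i - (q - q⁻¹))
            * (kron p j * kron i l)) * (kron k x * kron x p)
        + D N q k * (D N q x)⁻¹ * (dd p k * dd x i)
          * (kron p j * kron k x * kron x l * kron i p) := by
    intro x p; simp only [Rhat_eq, Rinv_eq]; ring
  simp only [expand, Finset.sum_add_distrib]
  have c1 : ∑ x : Fin N, ∑ p : Fin N,
      D N q k * (D N q x)⁻¹ * (cc q p k * (cc q x i - (q - q⁻¹)))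
        * (kron k j * kron i l) * (kron p x * kron x p)
      = kron i k * (kron k j * kron i l) := by
    have step1 : ∀ x p : Fin N,
        D N q k * (D N q x)⁻¹ * (cc q p k * (cc q x i - (q - q⁻¹)))
          * (kron k j * kron i l) * (kron p x * kron x p)
        = if p = x then D N q k * (D N q x)⁻¹ * (cc q x k * (cc q x i - (q - q⁻¹)))
            * (kron k j * kron i l) else 0 := by
      intro x p
      rcases eq_or_ne p x with h | h
      · rw [if_pos h, h]; simp [kron]
      · rw [if_neg h]; simp [kron, h]
    simp only [step1, Finset.sum_ite_eq', Finset.mem_univ, if_true]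
    rw [← Finset.sum_mul]
    simp only [D]
    rw [Slem N q hq i k]
  have c2 : ∑ x : Fin N, ∑ p : Fin N,
      D N q k * (D N q x)⁻¹ * (cc q p k * dd x i * kron k j)
        * (kron p x * kron x l * kron i p) = 0 := by
    have step2 : ∀ x p : Fin N,
        D N q k * (D N q x)⁻¹ * (cc q p k * dd x i * kron k j)
          * (kron p x * kron x l * kron i p) = 0 := by
      intro x p
      rcases eq_or_ne p x with h | h
      · rcases eq_or_ne i p with h2 | h2
        · have hxi : x = i := by rw [← h, ← h2]
          simp [hxi, dd, kron]
        · simp [kron, h2]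
      · simp [kron, h]
    simp [step2]
  have c3 : ∑ x : Fin N, ∑ p : Fin N,
      D N q k * (D N q x)⁻¹ * (dd p k * (cc q x i - (q - q⁻¹))
        * (kron p j * kron i l)) * (kron k x * kron x p) = 0 := by
    have step3 : ∀ x p : Fin N,
        D N q k * (D N q x)⁻¹ * (dd p k * (cc q x i - (q - q⁻¹))
          * (kron p j * kron i l)) * (kron k x * kron x p) = 0 := by
      intro x p
      rcases eq_or_ne x p with h | h
      · rcases eq_or_ne k x with h2 | h2
        · have hpk : p = k := by rw [← h, ← h2]
          simp [hpk, dd, kron]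
        · simp [kron, h2]
      · simp [kron, h]
    simp [step3]
  have c4 : ∑ x : Fin N, ∑ p : Fin N,
      D N q k * (D N q x)⁻¹ * (dd p k * dd x i)
        * (kron p j * kron k x * kron x l * kron i p)
      = kron k l * kron i j * (dd j k * dd k i) := by
    have step4 : ∀ x p : Fin N,
        D N q k * (D N q x)⁻¹ * (dd p k * dd x i)
          * (kron p j * kron k x * kron x l * kron i p)
        = if x = k then (if p = j then kron k l * kron i j * (dd j k * dd k i) else 0)
          else 0 := by
      intro x p
      rcases eq_or_ne x k with h | h
      · rw [if_pos h, h]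
        rcases eq_or_ne p j with h2 | h2
        · rw [if_pos h2, h2]
          have hD : D N q k * (D N q k)⁻¹ = 1 :=
            mul_inv_cancel₀ (by simp only [D]; exact zpow_ne_zero _ hq)
          rw [hD]
          simp only [kron, dd, if_pos rfl]
          split_ifs <;> first | (exfalso; omega) | ring
        · rw [if_neg h2]; simp [kron, h2]
      · rw [if_neg h]
        have h2 : ¬ k = x := fun hh => h hh.symm
        simp [kron, h2]
    simp only [step4, Finset.sum_ite_eq', Finset.mem_univ, if_true]
    simp
  rw [c1, c2, c3, c4]
  simp only [kron, dd]
  split_ifs <;> first | (exfalso; omega) | ring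

set_option maxHeartbeats 1000000 in
/-- Lemma B: the β-part. -/
lemma lemB (N : ℕ) (q : ℂ) (hq : q ≠ 0) (i j k l : Fin N) :
    ∑ m : Fin N, ∑ r : Fin N, ∑ x : Fin N, ∑ p : Fin N, ∑ t : Fin N, ∑ y : Fin N,
      D N q k * (D N q x)⁻¹ * Rhat N q p k x j * Rinv N q t m y r
        * Rhat N q x i t m * Rinv N q y r p l
      = kron i j * kron k l := by
  -- reorder sums from (m r x p t y) to (x p y r t m)
  conv_lhs => rw [Finset.sum_comm]
  conv_lhs => enter [2, r]; rw [Finset.sum_comm]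
  conv_lhs => rw [Finset.sum_comm]
  conv_lhs => enter [2, x, 2, r]; rw [Finset.sum_comm]
  conv_lhs => enter [2, x]; rw [Finset.sum_comm]
  conv_lhs => enter [2, x, 2, p, 2, r]; rw [Finset.sum_comm]
  conv_lhs => enter [2, x, 2, p, 2, r, 2, t]; rw [Finset.sum_comm]
  conv_lhs => enter [2, x, 2, p, 2, r]; rw [Finset.sum_comm]
  conv_lhs => enter [2, x, 2, p]; rw [Finset.sum_comm]
  have inner1 : ∀ x p y r : Fin N,
      ∑ t : Fin N, ∑ m : Fin N,
        D N q k * (D N q x)⁻¹ * Rhat N q p k x j * Rinv N q t m y r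
          * Rhat N q x i t m * Rinv N q y r p l
      = (D N q k * (D N q x)⁻¹ * Rhat N q p k x j * Rinv N q y r p l)
          * (kron x y * kron i r) := by
    intro x p y r
    rw [← T3 N q hq x i y r, Finset.mul_sum]
    exact Finset.sum_congr rfl fun t _ => by
      rw [Finset.mul_sum]; exact Finset.sum_congr rfl fun m _ => by ring
  simp only [inner1]
  have inner2 : ∀ x p : Fin N,
      ∑ y : Fin N, ∑ r : Fin N,
        (D N q k * (D N q x)⁻¹ * Rhat N q p k x j * Rinv N q y r p l)
          * (kron x y * kron i r)
      = D N q k * (D N q x)⁻¹ * Rhat N q p k x j * Rinv N q x i p l := by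
    intro x p
    have st : ∀ y r : Fin N,
        (D N q k * (D N q x)⁻¹ * Rhat N q p k x j * Rinv N q y r p l)
          * (kron x y * kron i r)
        = if x = y then (if i = r then
            D N q k * (D N q x)⁻¹ * Rhat N q p k x j * Rinv N q y r p l else 0)
          else 0 := by
      intro y r
      simp only [kron, mul_ite, ite_mul, mul_zero, zero_mul, mul_one, one_mul]
      split_ifs <;> first | ring | simp_all
    simp only [st]
    have pull : ∀ y : Fin N,
        (∑ r : Fin N, if x = y then (if i = r then
            D N q k * (D N q x)⁻¹ * Rhat N q p k x j * Rinv N q y r p l else 0) else 0)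
        = if x = y then
            D N q k * (D N q x)⁻¹ * Rhat N q p k x j * Rinv N q y i p l else 0 := by
      intro y
      split_ifs with h
      · simp
      · simp
    simp only [pull, Finset.sum_ite_eq, Finset.mem_univ, if_true]
  simp only [inner2]
  exact T4 N q hq i j k l

set_option maxHeartbeats 1000000 in
/-- Lemma A: the α-part. -/
lemma lemA (N : ℕ) (q : ℂ) (hq : q ≠ 0) (i j k l : Fin N) :
    ∑ m : Fin N, ∑ n : Fin N, ∑ x : Fin N, ∑ p : Fin N, ∑ t : Fin N, ∑ y : Fin N,
      (D N q k * (D N q x)⁻¹ * Rhat N q p k x j * Rinv N q t n y n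
        * Rhat N q x i t m * Rinv N q y m p l) * q ^ (2 * ((n.1 : ℤ) + 1))
      = q ^ (2 * ((j.1 : ℤ) + 1)) * kron j k * kron i l := by
  -- reorder sums from (m n x p t y) to (x p t m y n)
  conv_lhs => rw [Finset.sum_comm]
  conv_lhs => enter [2, n]; rw [Finset.sum_comm]
  conv_lhs => rw [Finset.sum_comm]
  conv_lhs => enter [2, x, 2, n]; rw [Finset.sum_comm]
  conv_lhs => enter [2, x]; rw [Finset.sum_comm]
  conv_lhs => enter [2, x, 2, p]; rw [Finset.sum_comm]
  conv_lhs => enter [2, x, 2, p, 2, m]; rw [Finset.sum_comm]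
  conv_lhs => enter [2, x, 2, p, 2, m, 2, t]; rw [Finset.sum_comm]
  conv_lhs => enter [2, x, 2, p]; rw [Finset.sum_comm]
  have inner1 : ∀ x p t m y : Fin N,
      ∑ n : Fin N, (D N q k * (D N q x)⁻¹ * Rhat N q p k x j * Rinv N q t n y n
        * Rhat N q x i t m * Rinv N q y m p l) * q ^ (2 * ((n.1 : ℤ) + 1))
      = (D N q k * (D N q x)⁻¹ * Rhat N q p k x j * Rhat N q x i t m
          * Rinv N q y m p l) * (q * kron t y) := by
    intro x p t m y
    rw [← T1 N q hq t y, Finset.mul_sum]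
    exact Finset.sum_congr rfl fun n _ => by ring
  simp only [inner1]
  have inner2 : ∀ x p t m : Fin N,
      ∑ y : Fin N, (D N q k * (D N q x)⁻¹ * Rhat N q p k x j * Rhat N q x i t m
          * Rinv N q y m p l) * (q * kron t y)
      = (D N q k * (D N q x)⁻¹ * Rhat N q p k x j)
          * (Rhat N q x i t m * Rinv N q t m p l) * q := by
    intro x p t m
    have st : ∀ y : Fin N,
        (D N q k * (D N q x)⁻¹ * Rhat N q p k x j * Rhat N q x i t m
          * Rinv N q y m p l) * (q * kron t y)
        = if t = y then (D N q k * (D N q x)⁻¹ * Rhat N q p k x j)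
            * (Rhat N q x i t m * Rinv N q y m p l) * q else 0 := by
      intro y
      simp only [kron, mul_ite, ite_mul, mul_zero, zero_mul, mul_one, one_mul]
      split_ifs <;> first | ring | simp_all
    simp only [st, Finset.sum_ite_eq, Finset.mem_univ, if_true]
  simp only [inner2]
  have inner3 : ∀ x p : Fin N,
      ∑ t : Fin N, ∑ m : Fin N, (D N q k * (D N q x)⁻¹ * Rhat N q p k x j)
          * (Rhat N q x i t m * Rinv N q t m p l) * q
      = (D N q k * (D N q x)⁻¹ * Rhat N q p k x j) * (kron x p * kron i l) * q := by
    intro x p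
    rw [← T3 N q hq x i p l]
    simp only [Finset.mul_sum, Finset.sum_mul]
    try exact Finset.sum_congr rfl fun t _ => Finset.sum_congr rfl fun m _ => by ring
    try rfl
  simp only [inner3]
  have inner4 : ∀ x : Fin N,
      ∑ p : Fin N, (D N q k * (D N q x)⁻¹ * Rhat N q p k x j)
          * (kron x p * kron i l) * q
      = (D N q k * ((D N q x)⁻¹ * Rhat N q x k x j)) * kron i l * q := by
    intro x
    have st : ∀ p : Fin N,
        (D N q k * (D N q x)⁻¹ * Rhat N q p k x j) * (kron x p * kron i l) * q
        = if x = p then (D N q k * ((D N q x)⁻¹ * Rhat N q p k x j)) * kron i l * q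
          else 0 := by
      intro p
      simp only [kron, mul_ite, ite_mul, mul_zero, zero_mul, mul_one, one_mul]
      split_ifs <;> first | ring | simp_all
    simp only [st, Finset.sum_ite_eq, Finset.mem_univ, if_true]
  simp only [inner4]
  have final : ∑ x : Fin N, (D N q k * ((D N q x)⁻¹ * Rhat N q x k x j)) * kron i l * q
      = (D N q k * (q⁻¹ * kron k j)) * kron i l * q := by
    rw [← T2 N q hq k j]
    simp only [Finset.mul_sum, Finset.sum_mul]
    exact Finset.sum_congr rfl fun x _ => by simp only [D]; try ring
  rw [final]
  rcases eq_or_ne k j with rfl | hkj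
  · simp only [D, kron, if_pos rfl]
    field_simp
  · have h2 : j ≠ k := Ne.symm hkj
    simp [D, kron, hkj, h2]

lemma sum_if_const {N : ℕ} (c : Prop) [Decidable c] (f : Fin N → ℂ) :
    (∑ r : Fin N, if c then f r else 0) = if c then ∑ r : Fin N, f r else 0 := by
  split_ifs <;> simp

set_option maxHeartbeats 1000000 in
/-- Every invariant metric on `Γ_{−,z}` is symmetric with respect to the braiding:
`Σ_{m,n,r,s} σ^{mnrs}_{ijkl} G_{(mn),(rs)} = G_{(ij),(kl)}`. -/
theorem sigmaMinus_symmetric_metric (N : ℕ) (hN : 2 ≤ N) (q : ℂ) (hq : q ≠ 0)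
    (α β : ℂ) (i j k l : Fin N) :
    ∑ m : Fin N, ∑ n : Fin N, ∑ r : Fin N, ∑ s : Fin N,
      sigmaMinus N q m n r s i j k l * G N q α β (m, n) (r, s)
      = G N q α β (i, j) (k, l) := by
  simp only [G, Matrix.of_apply]
  have stepSplit : ∀ m n r s : Fin N,
      sigmaMinus N q m n r s i j k l * (q ^ (2 * ((n.1 : ℤ) + 1)) * α * kron m s * kron n r
          + β * kron m n * kron r s)
      = (if m = s then (if n = r then
            (sigmaMinus N q m n r s i j k l * q ^ (2 * ((n.1 : ℤ) + 1))) * α else 0) else 0)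
        + (if r = s then (if m = n then sigmaMinus N q m n r s i j k l * β else 0) else 0) := by
    intro m n r s
    simp only [kron, mul_ite, ite_mul, mul_zero, zero_mul, mul_one, one_mul, mul_add]
    split_ifs <;> first | ring | simp_all
  simp only [stepSplit, Finset.sum_add_distrib, Finset.sum_ite_eq, Finset.mem_univ, if_true,
    sum_if_const]
  have hα : ∑ m : Fin N, ∑ n : Fin N,
      sigmaMinus N q m n n m i j k l * q ^ (2 * ((n.1 : ℤ) + 1)) * α
      = q ^ (2 * ((j.1 : ℤ) + 1)) * kron j k * kron i l * α := by
    rw [← lemA N q hq i j k l]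
    simp only [sigmaMinus, Finset.sum_mul]
  have hβ : ∑ m : Fin N, ∑ r : Fin N, sigmaMinus N q m m r r i j k l * β
      = kron i j * kron k l * β := by
    rw [← lemB N q hq i j k l]
    simp only [sigmaMinus, Finset.sum_mul]
  rw [hα, hβ]
  ring

end Stmt5
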